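/- Let X : Ω → ℝ^n and E : Ω → ℝ^m be independent random variables with probability densities f and h with respect to Lebesgue measure, Θ : ℝ^n → ℝ^m measurable, and G := Θ(X) + E. Then for (law of G)-almost every g ∈ ℝ^m with normalizing constant Z(g) := ∫_{ℝ^n} f(x) h(g − Θ(x)) dx satisfying 0 < Z(g) < ∞, the regular conditional distribution of X given G = g is absolutely continuous with respect to Lebesgue measure on ℝ^n with density x ↦ f(x) h(g − Θ(x)) / Z(g). -/

import Mathlib

open MeasureTheory ProbabilityTheory

section Aux

variable {n m : ℕ}

/-- Auxiliary: the unnormalized joint density. -/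
noncomputable def pdRho (f : (Fin n → ℝ) → ℝ) (h : (Fin m → ℝ) → ℝ)
    (Θ : (Fin n → ℝ) → (Fin m → ℝ)) : (Fin m → ℝ) × (Fin n → ℝ) → ENNReal :=
  fun p => ENNReal.ofReal (f p.2) * ENNReal.ofReal (h (p.1 - Θ p.2))

/-- Auxiliary: the ENNReal normalizing constant. -/
noncomputable def pdZ (f : (Fin n → ℝ) → ℝ) (h : (Fin m → ℝ) → ℝ)
    (Θ : (Fin n → ℝ) → (Fin m → ℝ)) : (Fin m → ℝ) → ENNReal :=
  fun g => ∫⁻ x, pdRho f h Θ (g, x)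

end Aux

/-- Posterior density formula of the statistical inverse problem: with prior
density `f`, independent additive noise density `h`, forward map `Θ` and
measurement `G = Θ(X) + E`, for `(law of G)`-a.e. `g` with positive (finite)
normalizing constant `Z(g) = ∫ f(x) h(g − Θ(x)) dx`, the regular conditional
distribution of `X` given `G = g` has density `x ↦ f(x)h(g − Θ(x))/Z(g)`. -/
theorem posterior_density_formula
    {Ω : Type*} [MeasurableSpace Ω] (P : Measure Ω) [IsProbabilityMeasure P]
    {n m : ℕ} (X : Ω → (Fin n → ℝ)) (E : Ω → (Fin m → ℝ))
    (hX : Measurable X) (hE : Measurable E)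
    (hindep : ProbabilityTheory.IndepFun X E P)
    (f : (Fin n → ℝ) → ℝ) (hf_meas : Measurable f) (hf_nonneg : ∀ x, 0 ≤ f x)
    (hf : Measure.map X P = volume.withDensity (fun x => ENNReal.ofReal (f x)))
    (h : (Fin m → ℝ) → ℝ) (hh_meas : Measurable h) (hh_nonneg : ∀ y, 0 ≤ h y)
    (hh : Measure.map E P = volume.withDensity (fun y => ENNReal.ofReal (h y)))
    (Θ : (Fin n → ℝ) → (Fin m → ℝ)) (hΘ : Measurable Θ)
    (G : Ω → (Fin m → ℝ)) (hG : ∀ ω, G ω = Θ (X ω) + E ω)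
    (Z : (Fin m → ℝ) → ℝ) (hZ : ∀ g, Z g = ∫ x, f x * h (g - Θ x)) :
    ∀ᵐ g ∂(Measure.map G P), 0 < Z g →
      ProbabilityTheory.condDistrib X G P g =
        volume.withDensity (fun x => ENNReal.ofReal (f x * h (g - Θ x) / Z g)) := by
  classical
  set f' : (Fin n → ℝ) → ENNReal := fun x => ENNReal.ofReal (f x) with hf'def
  set h' : (Fin m → ℝ) → ENNReal := fun y => ENNReal.ofReal (h y) with hh'def
  set ρ := pdRho f h Θ with hρdef
  set Z' := pdZ f h Θ with hZ'def
  have hρ_meas : Measurable ρ :=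
    ((ENNReal.measurable_ofReal.comp hf_meas).comp measurable_snd).mul
      ((ENNReal.measurable_ofReal.comp hh_meas).comp
        (measurable_fst.sub (hΘ.comp measurable_snd)))
  have hZ'_meas : Measurable Z' := hρ_meas.lintegral_prod_right'
  have hGmeas : Measurable G := by
    have hGfun : G = fun ω => Θ (X ω) + E ω := funext hG
    rw [hGfun]; exact (hΘ.comp hX).add hE
  -- the joint law of (X, E)
  have hXE : Measure.map (fun ω => (X ω, E ω)) P
      = (Measure.map X P).prod (Measure.map E P) :=
    (ProbabilityTheory.indepFun_iff_map_prod_eq_prod_map_map hX.aemeasurable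
      hE.aemeasurable).mp hindep
  have hT : Measurable (fun p : (Fin n → ℝ) × (Fin m → ℝ) => (Θ p.1 + p.2, p.1)) :=
    ((hΘ.comp measurable_fst).add measurable_snd).prodMk measurable_fst
  have hGXfun : (fun ω => (G ω, X ω))
      = (fun p : (Fin n → ℝ) × (Fin m → ℝ) => (Θ p.1 + p.2, p.1)) ∘ (fun ω => (X ω, E ω)) := by
    funext ω; simp [hG ω, Function.comp]
  -- the joint law of (G, X)
  have hGX : Measure.map (fun ω => (G ω, X ω)) P
      = ((volume : Measure (Fin m → ℝ)).prod (volume : Measure (Fin n → ℝ))).withDensity ρ := by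
    rw [hGXfun, ← Measure.map_map hT (hX.prodMk hE), hXE, hf, hh]
    ext S hS
    rw [Measure.map_apply hT hS, withDensity_apply _ hS,
      Measure.prod_apply (hT hS),
      lintegral_withDensity_eq_lintegral_mul _ hf_meas.ennreal_ofReal
        (measurable_measure_prodMk_left (hT hS))]
    have hstep : ∀ x : Fin n → ℝ,
        (f' x) * (volume.withDensity h') (Prod.mk x ⁻¹'
            ((fun p : (Fin n → ℝ) × (Fin m → ℝ) => (Θ p.1 + p.2, p.1)) ⁻¹' S))
        = ∫⁻ g, S.indicator ρ (g, x) := by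
      intro x
      have hsect : MeasurableSet (Prod.mk x ⁻¹'
          ((fun p : (Fin n → ℝ) × (Fin m → ℝ) => (Θ p.1 + p.2, p.1)) ⁻¹' S)) :=
        measurable_prodMk_left (hT hS)
      rw [withDensity_apply _ hsect]
      rw [← lintegral_indicator hsect _]
      have htrans : ∫⁻ e, (Prod.mk x ⁻¹'
            ((fun p : (Fin n → ℝ) × (Fin m → ℝ) => (Θ p.1 + p.2, p.1)) ⁻¹' S)).indicator h' e
          = ∫⁻ g, (Prod.mk x ⁻¹'
            ((fun p : (Fin n → ℝ) × (Fin m → ℝ) => (Θ p.1 + p.2, p.1)) ⁻¹' S)).indicator h'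
              (g - Θ x) := by
        rw [lintegral_sub_right_eq_self (fun e => (Prod.mk x ⁻¹'
            ((fun p : (Fin n → ℝ) × (Fin m → ℝ) => (Θ p.1 + p.2, p.1)) ⁻¹' S)).indicator h' e)
            (Θ x)]
      have hind_meas : Measurable fun g : Fin m → ℝ =>
          (Prod.mk x ⁻¹' ((fun p : (Fin n → ℝ) × (Fin m → ℝ) =>
            (Θ p.1 + p.2, p.1)) ⁻¹' S)).indicator h' (g - Θ x) :=
        (hh_meas.ennreal_ofReal.indicator (measurable_prodMk_left (hT hS))).comp
          (measurable_id.sub measurable_const)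
      rw [htrans, ← lintegral_const_mul _ hind_meas]
      · refine lintegral_congr fun g => ?_
        by_cases hgS : (g, x) ∈ S
        · have hmem : g - Θ x ∈ Prod.mk x ⁻¹'
              ((fun p : (Fin n → ℝ) × (Fin m → ℝ) => (Θ p.1 + p.2, p.1)) ⁻¹' S) := by
            simp only [Set.mem_preimage]
            simpa [add_sub_cancel] using hgS
          rw [Set.indicator_of_mem hmem, Set.indicator_of_mem hgS]
          rfl
        · have hmem : g - Θ x ∉ Prod.mk x ⁻¹'
              ((fun p : (Fin n → ℝ) × (Fin m → ℝ) => (Θ p.1 + p.2, p.1)) ⁻¹' S) := by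
            simp only [Set.mem_preimage]
            simpa [add_sub_cancel] using hgS
          rw [Set.indicator_of_notMem hmem, Set.indicator_of_notMem hgS, mul_zero]
    calc ∫⁻ x, (f' x) * (volume.withDensity h') (Prod.mk x ⁻¹'
            ((fun p : (Fin n → ℝ) × (Fin m → ℝ) => (Θ p.1 + p.2, p.1)) ⁻¹' S))
        = ∫⁻ x, ∫⁻ g, S.indicator ρ (g, x) := lintegral_congr hstep
      _ = ∫⁻ g, ∫⁻ x, S.indicator ρ (g, x) := by
          exact lintegral_lintegral_swap ((hρ_meas.indicator hS).comp measurable_swap).aemeasurable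
      _ = ∫⁻ p, S.indicator ρ p ∂((volume : Measure (Fin m → ℝ)).prod volume) :=
          (lintegral_prod _ (hρ_meas.indicator hS).aemeasurable).symm
      _ = ∫⁻ p in S, ρ p ∂((volume : Measure (Fin m → ℝ)).prod volume) :=
          lintegral_indicator hS _
  -- the marginal law of G
  have hGmarg : Measure.map G P = volume.withDensity Z' := by
    have : Measure.map G P = Measure.map Prod.fst (Measure.map (fun ω => (G ω, X ω)) P) := by
      rw [Measure.map_map measurable_fst (hGmeas.prodMk hX)]
      rfl
    rw [this, hGX]
    ext A hA
    rw [Measure.map_apply measurable_fst hA,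
      withDensity_apply _ (measurable_fst hA), withDensity_apply _ hA,
      ← lintegral_indicator (measurable_fst hA) _, ← lintegral_indicator hA _,
      lintegral_prod _ (hρ_meas.indicator (measurable_fst hA)).aemeasurable]
    refine lintegral_congr fun g => ?_
    by_cases hgA : g ∈ A
    · rw [Set.indicator_of_mem hgA]
      have hZg' : Z' g = ∫⁻ x, ρ (g, x) := rfl
      rw [hZg']
      exact lintegral_congr fun x =>
        Set.indicator_of_mem (by exact hgA : (g, x) ∈ Prod.fst ⁻¹' A) _
    · rw [Set.indicator_of_notMem hgA]
      have hzero : ∀ x : Fin n → ℝ, (Prod.fst ⁻¹' A).indicator ρ (g, x) = 0 := fun x =>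
        Set.indicator_of_notMem (by exact hgA : (g, x) ∉ Prod.fst ⁻¹' A) _
      simp [hzero]
  -- the candidate kernel
  set d : (Fin m → ℝ) → (Fin n → ℝ) → ENNReal := fun g x => ρ (g, x) * (Z' g)⁻¹ with hddef
  have hd_meas : Measurable (Function.uncurry d) := by
    have : Function.uncurry d = fun p : (Fin m → ℝ) × (Fin n → ℝ) => ρ p * (Z' p.1)⁻¹ := rfl
    rw [this]
    exact hρ_meas.mul ((hZ'_meas.comp measurable_fst).inv)
  set κ : Kernel (Fin m → ℝ) (Fin n → ℝ) :=
    Kernel.withDensity (Kernel.const _ (volume : Measure (Fin n → ℝ))) d with hκdef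
  have hκ_apply : ∀ g, κ g = volume.withDensity (d g) := by
    intro g
    rw [hκdef, Kernel.withDensity_apply _ hd_meas, Kernel.const_apply]
  -- key computation for the kernel
  have hκ_sect : ∀ g : Fin m → ℝ, ∀ A : Set (Fin n → ℝ), MeasurableSet A →
      Z' g ≠ ⊤ → Z' g * κ g A = ∫⁻ x in A, ρ (g, x) := by
    intro g A hA hfin
    rw [hκ_apply, withDensity_apply _ hA]
    have hmeasg : Measurable fun x : Fin n → ℝ => ρ (g, x) :=
      hρ_meas.comp measurable_prodMk_left
    by_cases hz : Z' g = 0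
    · have hzero : (fun x => ρ (g, x)) =ᵐ[(volume : Measure (Fin n → ℝ))] 0 := by
        rw [← lintegral_eq_zero_iff hmeasg]
        exact hz
      have h1 : ∫⁻ x in A, d g x ∂volume = 0 := by
        calc ∫⁻ x in A, d g x ∂volume
            = ∫⁻ x in A, 0 ∂volume := by
              refine lintegral_congr_ae (ae_restrict_of_ae ?_)
              filter_upwards [hzero] with x hx
              have hx' : ρ (g, x) = 0 := hx
              simp [hddef, hx']
          _ = 0 := lintegral_zero
      have h2 : ∫⁻ x in A, ρ (g, x) ∂volume = 0 := by
        calc ∫⁻ x in A, ρ (g, x) ∂volume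
            = ∫⁻ x in A, 0 ∂volume := by
              refine lintegral_congr_ae (ae_restrict_of_ae ?_)
              filter_upwards [hzero] with x hx
              have hx' : ρ (g, x) = 0 := hx
              simp [hx']
          _ = 0 := lintegral_zero
      rw [h1, h2, mul_zero]
    · have : ∫⁻ x in A, d g x ∂volume = (∫⁻ x in A, ρ (g, x)) * (Z' g)⁻¹ :=
        lintegral_mul_const' _ _ (by simp [hz])
      rw [this, ← mul_assoc, mul_comm (Z' g), mul_assoc,
        ENNReal.mul_inv_cancel hz hfin, mul_one]
  haveI hκ_fin : IsFiniteKernel κ := by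
    refine ⟨⟨1, ENNReal.one_lt_top, fun g => ?_⟩⟩
    rw [hκ_apply, withDensity_apply _ MeasurableSet.univ, Measure.restrict_univ]
    have hmeasg : Measurable fun x : Fin n → ℝ => ρ (g, x) :=
      hρ_meas.comp measurable_prodMk_left
    by_cases hz : Z' g = 0
    · have hzero : (fun x => ρ (g, x)) =ᵐ[(volume : Measure (Fin n → ℝ))] 0 := by
        rw [← lintegral_eq_zero_iff hmeasg]
        exact hz
      have h1 : ∫⁻ x, d g x ∂volume = 0 := by
        calc ∫⁻ x, d g x ∂volume
            = ∫⁻ x, 0 ∂(volume : Measure (Fin n → ℝ)) := by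
              refine lintegral_congr_ae ?_
              filter_upwards [hzero] with x hx
              have hx' : ρ (g, x) = 0 := hx
              simp [hddef, hx']
          _ = 0 := lintegral_zero
      rw [h1]; exact zero_le_one
    · have : ∫⁻ x, d g x ∂volume = (∫⁻ x, ρ (g, x)) * (Z' g)⁻¹ :=
        lintegral_mul_const' _ _ (by simp [hz])
      rw [this]
      exact ENNReal.mul_inv_le_one _
  haveI : IsProbabilityMeasure (Measure.map G P) :=
    Measure.isProbabilityMeasure_map hGmeas.aemeasurable
  -- Z' is a.e. finite
  have hZ'_int : ∫⁻ g, Z' g = 1 := by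
    have : (volume.withDensity Z') Set.univ = 1 := by
      rw [← hGmarg]; exact measure_univ
    rwa [withDensity_apply _ MeasurableSet.univ, Measure.restrict_univ] at this
  have hZ'_fin : ∀ᵐ g ∂(volume : Measure (Fin m → ℝ)), Z' g ≠ ⊤ := by
    filter_upwards [ae_lt_top hZ'_meas (hZ'_int ▸ ENNReal.one_ne_top)] with g hg
    exact hg.ne
  -- the compProd identity
  have hcomp : Measure.map (fun ω => (G ω, X ω)) P = (Measure.map G P) ⊗ₘ κ := by
    rw [hGX, hGmarg]
    ext S hS
    rw [withDensity_apply _ hS, Measure.compProd_apply hS,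
      lintegral_withDensity_eq_lintegral_mul _ hZ'_meas
        (Kernel.measurable_kernel_prodMk_left hS)]
    have hstep : ∀ᵐ g ∂(volume : Measure (Fin m → ℝ)),
        (Z' * fun g => κ g (Prod.mk g ⁻¹' S)) g = ∫⁻ x in Prod.mk g ⁻¹' S, ρ (g, x) := by
      filter_upwards [hZ'_fin] with g hfin
      exact hκ_sect g _ (measurable_prodMk_left hS) hfin
    rw [lintegral_congr_ae hstep]
    symm
    calc ∫⁻ g, ∫⁻ x in Prod.mk g ⁻¹' S, ρ (g, x)
        = ∫⁻ g, ∫⁻ x, S.indicator ρ (g, x) := by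
          refine lintegral_congr fun g => ?_
          rw [← lintegral_indicator (measurable_prodMk_left hS) _]
          refine lintegral_congr fun x => ?_
          by_cases hgx : (g, x) ∈ S
          · rw [Set.indicator_of_mem hgx, Set.indicator_of_mem (by exact hgx)]
          · rw [Set.indicator_of_notMem hgx, Set.indicator_of_notMem (by exact hgx)]
      _ = ∫⁻ p, S.indicator ρ p ∂((volume : Measure (Fin m → ℝ)).prod volume) :=
          (lintegral_prod _ (hρ_meas.indicator hS).aemeasurable).symm
      _ = ∫⁻ p in S, ρ p ∂((volume : Measure (Fin m → ℝ)).prod volume) :=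
          lintegral_indicator hS _
  -- conclude via uniqueness of condDistrib
  have hae := ProbabilityTheory.condDistrib_ae_eq_of_measure_eq_compProd_of_measurable
    (μ := P) hGmeas hX (κ := κ) hcomp
  filter_upwards [hae] with g hg hZpos
  rw [hg, hκ_apply]
  -- relate Z g and Z' g
  have hZg : Z g = (Z' g).toReal := by
    rw [hZ g, integral_eq_lintegral_of_nonneg_ae (f := fun x => f x * h (g - Θ x))
      (Filter.Eventually.of_forall fun x => mul_nonneg (hf_nonneg x) (hh_nonneg _))
      ((hf_meas.mul (hh_meas.comp (measurable_const.sub hΘ))).aestronglyMeasurable)]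
    congr 1
    refine lintegral_congr fun x => ?_
    rw [ENNReal.ofReal_mul (hf_nonneg x)]
    rfl
  have hZ'pos : 0 < Z' g ∧ Z' g < ⊤ := by
    rw [hZg] at hZpos
    exact ENNReal.toReal_pos_iff.mp hZpos
  have hZofReal : ENNReal.ofReal (Z g) = Z' g := by
    rw [hZg]; exact ENNReal.ofReal_toReal hZ'pos.2.ne
  congr 1
  funext x
  rw [ENNReal.ofReal_div_of_pos hZpos, ENNReal.ofReal_mul (hf_nonneg x), hZofReal,
    ENNReal.div_eq_inv_mul, mul_comm]
  rfl
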